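/- Let n ≥ 2 and consider complex numbers a_1, …, a_{n−1} with Σ_i a_i = λ > 0 and a_i·conj(a_k) + a_k·conj(a_i) = 0 for all 1 ≤ i < k ≤ n−1. Then either (rank 1) exactly one a_i equals λ and the rest are 0, or (rank 2) exactly two are nonzero and, after relabeling so these are a_{n−2}, a_{n−1}, there exists ρ ∈ ℂ with |ρ| = 1 such that a_{n−2} = (λ/2)(1+ρ) and a_{n−1} = (λ/2)(1−ρ). -/

import Mathlib

/-- Classification of torsion eigenvalues of a non-Kähler SKL manifold with
degenerate torsion: either exactly one `a i` is nonzero and equals `λ` (rank 1),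
or exactly two are nonzero of the form `(λ/2)(1 ± ρ)` with `|ρ| = 1` (rank 2). -/
theorem stmt16 (n : ℕ) (hn : 2 ≤ n) (lam : ℝ) (hlam : 0 < lam)
    (a : Fin (n - 1) → ℂ)
    (hsum : ∑ i, a i = (lam : ℂ))
    (horth : ∀ i k, i ≠ k → a i * star (a k) + a k * star (a i) = 0) :
    (∃ i, a i = (lam : ℂ) ∧ ∀ j, j ≠ i → a j = 0) ∨
    (∃ i j, i ≠ j ∧ a i ≠ 0 ∧ a j ≠ 0 ∧ (∀ k, k ≠ i → k ≠ j → a k = 0) ∧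
      ∃ ρ : ℂ, ‖ρ‖ = 1 ∧
        a i = ((lam : ℂ) / 2) * (1 + ρ) ∧ a j = ((lam : ℂ) / 2) * (1 - ρ)) := by
  classical
  -- no three nonzero
  have key : ∀ i j k : Fin (n-1), i ≠ j → i ≠ k → j ≠ k →
      a i ≠ 0 → a j ≠ 0 → a k ≠ 0 → False := by
    intro i j k hij hik hjk hi hj hk
    have eij := horth i j hij
    have eik := horth i k hik
    have ejk := horth j k hjk
    have hprod : (a i * star (a j)) * (a i * star (a k)) = 0 := by
      linear_combination (a i * star (a k))/2 * eij + (a i * star (a j))/2 * eik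
        - (a i * star (a i))/2 * ejk
    rcases mul_eq_zero.mp hprod with h | h <;>
      rcases mul_eq_zero.mp h with h' | h' <;>
      simp_all
  set s : Finset (Fin (n-1)) := Finset.univ.filter (fun i => a i ≠ 0) with hs
  have hmem : ∀ i, i ∈ s ↔ a i ≠ 0 := by intro i; simp [hs]
  have hsum' : ∑ i ∈ s, a i = (lam : ℂ) := by
    rw [← hsum]; exact Finset.sum_filter_ne_zero _
  have hlamC : (lam : ℂ) ≠ 0 := by exact_mod_cast hlam.ne'
  rcases Nat.lt_or_ge s.card 2 with hc | hc
  · interval_cases h : s.card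
    · exfalso
      rw [Finset.card_eq_zero] at h
      rw [h, Finset.sum_empty] at hsum'
      exact hlamC hsum'.symm
    · rw [Finset.card_eq_one] at h
      obtain ⟨i, hi⟩ := h
      left
      refine ⟨i, ?_, ?_⟩
      · rw [hi, Finset.sum_singleton] at hsum'; exact hsum'
      · intro j hji
        by_contra hj
        have : j ∈ s := (hmem j).mpr hj
        rw [hi, Finset.mem_singleton] at this
        exact hji this
  · obtain ⟨i, hi, j, hj, hij⟩ := Finset.one_lt_card.mp hc
    have hai : a i ≠ 0 := (hmem i).mp hi
    have haj : a j ≠ 0 := (hmem j).mp hj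
    have hz : ∀ k, k ≠ i → k ≠ j → a k = 0 := by
      intro k hki hkj
      by_contra hk
      exact key i j k hij (fun h => hki h.symm) (fun h => hkj h.symm) hai haj hk
    have hsum2 : a i + a j = (lam : ℂ) := by
      rw [← hsum]
      exact (Finset.sum_eq_add i j hij (fun c _ hc => hz c hc.1 hc.2)
        (by simp) (by simp)).symm
    have eij := horth i j hij
    right
    refine ⟨i, j, hij, hai, haj, hz, (a i - a j) / lam, ?_, ?_, ?_⟩
    · have hconj : star (a i) + star (a j) = (lam : ℂ) := by
        have := congrArg star hsum2
        simpa using this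
      have habs : (a i - a j) * star (a i - a j) = (lam : ℂ) * (lam : ℂ) := by
        rw [star_sub]
        linear_combination (star (a i) + star (a j)) * hsum2 + (lam : ℂ) * hconj - 2 * eij
      have hρ : ((a i - a j) / lam) * star ((a i - a j) / lam) = 1 := by
        have habs' := habs
        rw [star_sub] at habs'
        rw [star_div₀, star_sub]
        simp only [Complex.star_def, Complex.conj_ofReal] at habs' ⊢
        field_simp
        linear_combination habs'
      have h2 : ‖(a i - a j) / lam‖ ^ 2 = 1 := by
        have := congrArg norm hρ
        rw [norm_mul, norm_one, Complex.star_def, Complex.norm_conj] at this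
        rw [sq]; exact this
      have hnn := norm_nonneg ((a i - a j) / lam)
      nlinarith [h2, hnn]
    · field_simp
      linear_combination hsum2
    · field_simp
      linear_combination hsum2
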